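/- Let V be a p-operator space, n ∈ ℕ, and ‖·‖_{1,n} on M_n(V) as defined by the infimum over factorizations v = α w β of ‖α‖_{p'}‖w‖‖β‖_p. Then for all v ∈ M_n(V), ‖v‖_{M_n(V)} ≤ n^{2|1/p - 1/p'|} · ‖v‖_{1,n}. In particular, ‖v‖_{1,n} = 0 implies v = 0, so ‖·‖_{1,n} is a norm. -/

import Mathlib

open Finset Matrix

/-- The ℓ_q norm of a finite complex sequence. -/
noncomputable def lpNorm (q : ℝ) {m : ℕ} (x : Fin m → ℂ) : ℝ :=
  (∑ i, ‖x i‖ ^ q) ^ (1 / q)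

/-- The operator norm of a matrix viewed as a map `ℓ_q^b → ℓ_q^a`. -/
noncomputable def opNorm (q : ℝ) {a b : ℕ} (A : Matrix (Fin a) (Fin b) ℂ) : ℝ :=
  sSup {c | ∃ x : Fin b → ℂ, lpNorm q x ≤ 1 ∧ c = lpNorm q (A.mulVec x)}

/-- The entrywise ℓ_q norm of a matrix. -/
noncomputable def eNorm (q : ℝ) {a b : ℕ} (A : Matrix (Fin a) (Fin b) ℂ) : ℝ :=
  (∑ i, ∑ j, ‖A i j‖ ^ q) ^ (1 / q)

variable {V : Type*} [NormedAddCommGroup V] [NormedSpace ℂ V]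

/-- The product `α w β` of scalar matrices `α ∈ M_{n,r}(ℂ)`, `β ∈ M_{r,n}(ℂ)` with a
matrix `w ∈ M_r(V)` over a vector space `V`. -/
def act {n r : ℕ} (α : Matrix (Fin n) (Fin r) ℂ) (w : Matrix (Fin r) (Fin r) V)
    (β : Matrix (Fin r) (Fin n) ℂ) : Matrix (Fin n) (Fin n) V :=
  fun i j => ∑ k, ∑ l, (α i k * β l j) • w k l

/-- The block-diagonal direct sum `v₁ ⊕ v₂ ∈ M_{n+m}(V)`. -/
def blockDiag {n m : ℕ} (v₁ : Matrix (Fin n) (Fin n) V) (v₂ : Matrix (Fin m) (Fin m) V) :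
    Matrix (Fin (n + m)) (Fin (n + m)) V :=
  Matrix.reindex finSumFinEquiv finSumFinEquiv (Matrix.fromBlocks v₁ 0 0 v₂)

/-- An (abstract) p-operator space structure on a complex Banach space `V`: a sequence of
norms on the matrix spaces `M_r(V)` satisfying the axioms `D_∞` and `M_p`. -/
structure POpSpace (p : ℝ) (V : Type*) [NormedAddCommGroup V] [NormedSpace ℂ V] where
  /-- the norm on `M_r(V)` -/
  N : ∀ r : ℕ, Matrix (Fin r) (Fin r) V → ℝ
  nonneg : ∀ r w, 0 ≤ N r w
  add_le : ∀ r u w, N r (u + w) ≤ N r u + N r w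
  eq_zero_iff : ∀ r w, N r w = 0 ↔ w = 0
  smul_eq : ∀ r (c : ℂ) w, N r (c • w) = ‖c‖ * N r w
  Dinf : ∀ (n m : ℕ) (v₁ : Matrix (Fin n) (Fin n) V) (v₂ : Matrix (Fin m) (Fin m) V),
    N (n + m) (blockDiag v₁ v₂) = max (N n v₁) (N m v₂)
  Mp : ∀ (n r : ℕ) (α : Matrix (Fin n) (Fin r) ℂ) (w : Matrix (Fin r) (Fin r) V)
    (β : Matrix (Fin r) (Fin n) ℂ), N n (act α w β) ≤ opNorm p α * N r w * opNorm p β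

/-- The quantity `‖v‖_{1,n}` on `M_n(V)`: the infimum of `‖α‖_{p'} ‖w‖ ‖β‖_p` over all
factorizations `v = α w β`. -/
noncomputable def norm1 {p : ℝ} (p' : ℝ) (S : POpSpace p V) (n : ℕ)
    (v : Matrix (Fin n) (Fin n) V) : ℝ :=
  sInf {c | ∃ (r : ℕ) (α : Matrix (Fin n) (Fin r) ℂ) (w : Matrix (Fin r) (Fin r) V)
      (β : Matrix (Fin r) (Fin n) ℂ),
      v = act α w β ∧ c = eNorm p' α * S.N r w * eNorm p β}


/-- superadditivity of rpow for sums -/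
lemma my_sum_rpow_le_rpow_sum {ι : Type*} (s : Finset ι) {p : ℝ} (hp : 1 ≤ p)
    (c : ι → ℝ) (hc : ∀ i, 0 ≤ c i) :
    ∑ i ∈ s, c i ^ p ≤ (∑ i ∈ s, c i) ^ p := by
  classical
  induction s using Finset.induction with
  | empty => simp [Real.zero_rpow (by positivity : p ≠ 0)]
  | @insert a s h ih =>
    rw [Finset.sum_insert h, Finset.sum_insert h]
    have h2 : c a ^ p + (∑ i ∈ s, c i) ^ p ≤ (c a + ∑ i ∈ s, c i) ^ p := by
      have := NNReal.add_rpow_le_rpow_add (⟨c a, hc a⟩ : NNReal)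
        ⟨∑ i ∈ s, c i, Finset.sum_nonneg fun i _ => hc i⟩ hp
      exact_mod_cast this
    linarith

lemma my_lp_mono {m : ℕ} {q1 q2 : ℝ} (hq2 : 0 < q2) (hq : q2 ≤ q1) (a : Fin m → ℝ)
    (ha : ∀ i, 0 ≤ a i) :
    (∑ i, a i ^ q1) ^ (1/q1) ≤ (∑ i, a i ^ q2) ^ (1/q2) := by
  have hq1 : 0 < q1 := lt_of_lt_of_le hq2 hq
  have hS2 : 0 ≤ ∑ i, a i ^ q2 := Finset.sum_nonneg fun i _ => Real.rpow_nonneg (ha i) _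
  have key : ∑ i, a i ^ q1 ≤ (∑ i, a i ^ q2) ^ (q1/q2) := by
    have h1 : ∀ i : Fin m, a i ^ q1 = (a i ^ q2) ^ (q1/q2) := fun i => by
      rw [← Real.rpow_mul (ha i)]
      congr 1
      field_simp
    calc ∑ i, a i ^ q1 = ∑ i, (a i ^ q2) ^ (q1/q2) := by simp_rw [h1]
      _ ≤ (∑ i, a i ^ q2) ^ (q1/q2) :=
        my_sum_rpow_le_rpow_sum _ ((one_le_div hq2).2 hq) _
          (fun i => Real.rpow_nonneg (ha i) _)
  calc (∑ i, a i ^ q1) ^ (1/q1)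
      ≤ ((∑ i, a i ^ q2) ^ (q1/q2)) ^ (1/q1) :=
        Real.rpow_le_rpow (Finset.sum_nonneg fun i _ => Real.rpow_nonneg (ha i) _) key
          (by positivity)
    _ = (∑ i, a i ^ q2) ^ (1/q2) := by
        rw [← Real.rpow_mul hS2]
        congr 1
        field_simp

lemma my_lp_cmp {m : ℕ} {q1 q2 : ℝ} (hq1 : 0 < q1) (hq2 : 0 < q2) (hm : 1 ≤ m)
    (a : Fin m → ℝ) (ha : ∀ i, 0 ≤ a i) :
    (∑ i, a i ^ q1) ^ (1/q1) ≤ (m:ℝ) ^ |1/q1 - 1/q2| * (∑ i, a i ^ q2) ^ (1/q2) := by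
  have hm1 : (1:ℝ) ≤ (m:ℝ) := by exact_mod_cast hm
  have hS2 : 0 ≤ (∑ i, a i ^ q2) ^ (1/q2) :=
    Real.rpow_nonneg (Finset.sum_nonneg fun i _ => Real.rpow_nonneg (ha i) _) _
  rcases le_or_gt q2 q1 with h | h
  · calc (∑ i, a i ^ q1) ^ (1/q1) ≤ (∑ i, a i ^ q2) ^ (1/q2) := my_lp_mono hq2 h a ha
      _ = 1 * (∑ i, a i ^ q2) ^ (1/q2) := (one_mul _).symm
      _ ≤ (m:ℝ) ^ |1/q1 - 1/q2| * (∑ i, a i ^ q2) ^ (1/q2) :=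
        mul_le_mul_of_nonneg_right (Real.one_le_rpow hm1 (abs_nonneg _)) hS2
  · have habs : |1/q1 - 1/q2| = 1/q1 - 1/q2 := by
      rw [abs_of_pos]
      have := one_div_lt_one_div_of_lt hq1 h
      linarith
    have hp1 : (1:ℝ) ≤ q2/q1 := (one_le_div hq1).2 h.le
    have key := Real.inner_le_weight_mul_Lp_of_nonneg (Finset.univ : Finset (Fin m))
      (p := q2/q1) hp1 (fun _ => (1:ℝ)) (fun i => a i ^ q1) (fun _ => zero_le_one)
      (fun i => Real.rpow_nonneg (ha i) _)
    have hexp : ∀ i : Fin m, (a i ^ q1) ^ (q2/q1) = a i ^ q2 := fun i => by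
      rw [← Real.rpow_mul (ha i)]
      congr 1
      field_simp
    simp only [one_mul, Finset.sum_const, Finset.card_univ, Fintype.card_fin, nsmul_eq_mul,
      mul_one, hexp] at key
    -- key : ∑ a^q1 ≤ m ^ (1 - (q2/q1)⁻¹) * (∑ a^q2) ^ (q2/q1)⁻¹
    have hS1 : 0 ≤ ∑ i, a i ^ q1 := Finset.sum_nonneg fun i _ => Real.rpow_nonneg (ha i) _
    have hm0 : (0:ℝ) ≤ (m:ℝ) := by positivity
    have hSq : 0 ≤ ∑ i, a i ^ q2 := Finset.sum_nonneg fun i _ => Real.rpow_nonneg (ha i) _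
    calc (∑ i, a i ^ q1) ^ (1/q1)
        ≤ ((m:ℝ) ^ (1 - (q2/q1)⁻¹) * (∑ i, a i ^ q2) ^ (q2/q1)⁻¹) ^ (1/q1) :=
          Real.rpow_le_rpow hS1 key (by positivity)
      _ = (m:ℝ) ^ ((1 - (q2/q1)⁻¹) * (1/q1)) * (∑ i, a i ^ q2) ^ ((q2/q1)⁻¹ * (1/q1)) := by
          rw [Real.mul_rpow (by positivity) (by positivity), ← Real.rpow_mul hm0,
            ← Real.rpow_mul hSq]
      _ = (m:ℝ) ^ |1/q1 - 1/q2| * (∑ i, a i ^ q2) ^ (1/q2) := by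
          have e1 : (1 - (q2/q1)⁻¹) * (1/q1) = 1/q1 - 1/q2 := by
            rw [inv_div, sub_mul, one_mul, div_mul_div_comm, mul_one, mul_comm q2 q1,
              ← div_div, div_self hq1.ne']
          have e2 : (q2/q1)⁻¹ * (1/q1) = 1/q2 := by
            field_simp
          rw [habs, e1, e2]

section OpBounds

lemma my_lpNorm_nonneg (q : ℝ) {m : ℕ} (x : Fin m → ℂ) : 0 ≤ lpNorm q x :=
  Real.rpow_nonneg (Finset.sum_nonneg fun i _ => Real.rpow_nonneg (norm_nonneg _) _) _

lemma my_eNorm_nonneg (q : ℝ) {a b : ℕ} (A : Matrix (Fin a) (Fin b) ℂ) : 0 ≤ eNorm q A :=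
  Real.rpow_nonneg (Finset.sum_nonneg fun i _ => Finset.sum_nonneg fun j _ =>
    Real.rpow_nonneg (norm_nonneg _) _) _

lemma my_opNorm_nonneg (q : ℝ) {a b : ℕ} (A : Matrix (Fin a) (Fin b) ℂ) : 0 ≤ opNorm q A := by
  apply Real.sSup_nonneg
  rintro c ⟨x, hx, rfl⟩
  exact my_lpNorm_nonneg q _

lemma my_conj {p p' : ℝ} (hp : 1 < p) (hconj : 1 / p + 1 / p' = 1) :
    Real.HolderConjugate p p' :=
  Real.holderConjugate_iff.2 ⟨hp, by rw [← one_div, ← one_div]; exact hconj⟩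

lemma my_rpow_rpow_inv {S q : ℝ} (hS : 0 ≤ S) (hq : q ≠ 0) : (S ^ (1/q)) ^ q = S := by
  rw [← Real.rpow_mul hS, one_div_mul_cancel hq, Real.rpow_one]

lemma my_rpow_inv_rpow {S q : ℝ} (hS : 0 ≤ S) (hq : q ≠ 0) : (S ^ q) ^ (1/q) = S := by
  rw [← Real.rpow_mul hS, mul_one_div, div_self hq, Real.rpow_one]

lemma my_opNorm_le_A {p p' : ℝ} (hp : 1 < p) (hp' : 1 < p') (hconj : 1 / p + 1 / p' = 1)
    {n r : ℕ} (hn : 1 ≤ n) (α : Matrix (Fin n) (Fin r) ℂ) :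
    opNorm p α ≤ (n:ℝ) ^ |1/p - 1/p'| * eNorm p' α := by
  have hpc : Real.HolderConjugate p p' := my_conj hp hconj
  have hp0 : 0 < p := lt_trans one_pos hp
  have hp'0 : 0 < p' := lt_trans one_pos hp'
  set A : Fin n → ℝ := fun i => (∑ k, ‖α i k‖ ^ p') ^ (1/p') with hA
  have hAnn : ∀ i, 0 ≤ A i := fun i =>
    Real.rpow_nonneg (Finset.sum_nonneg fun k _ => Real.rpow_nonneg (norm_nonneg _) _) _
  have hMnn : 0 ≤ (n:ℝ) ^ |1/p - 1/p'| * eNorm p' α :=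
    mul_nonneg (Real.rpow_nonneg (Nat.cast_nonneg n) _) (my_eNorm_nonneg p' α)
  apply Real.sSup_le _ hMnn
  rintro c ⟨x, hx, rfl⟩
  have step1 : ∀ i, ‖α.mulVec x i‖ ≤ A i := by
    intro i
    have h1 : ‖α.mulVec x i‖ ≤ ∑ k, ‖α i k‖ * ‖x k‖ := by
      calc ‖α.mulVec x i‖ = ‖∑ k, α i k * x k‖ := rfl
        _ ≤ ∑ k, ‖α i k * x k‖ := norm_sum_le _ _
        _ = ∑ k, ‖α i k‖ * ‖x k‖ := by simp [norm_mul]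
    have h2 : ∑ k, ‖α i k‖ * ‖x k‖ ≤ A i * (∑ k, ‖x k‖ ^ p) ^ (1/p) :=
      Real.inner_le_Lp_mul_Lq_of_nonneg Finset.univ hpc.symm
        (fun k _ => norm_nonneg _) (fun k _ => norm_nonneg _)
    have h3 : (∑ k, ‖x k‖ ^ p) ^ (1/p) ≤ 1 := hx
    calc ‖α.mulVec x i‖ ≤ A i * (∑ k, ‖x k‖ ^ p) ^ (1/p) := le_trans h1 h2
      _ ≤ A i * 1 := mul_le_mul_of_nonneg_left h3 (hAnn i)
      _ = A i := mul_one _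
  have step2 : lpNorm p (α.mulVec x) ≤ (∑ i, A i ^ p) ^ (1/p) := by
    apply Real.rpow_le_rpow (Finset.sum_nonneg fun i _ => Real.rpow_nonneg (norm_nonneg _) _)
      _ (by positivity)
    exact Finset.sum_le_sum fun i _ =>
      Real.rpow_le_rpow (norm_nonneg _) (step1 i) hp0.le
  have step3 : (∑ i, A i ^ p) ^ (1/p) ≤ (n:ℝ) ^ |1/p - 1/p'| * (∑ i, A i ^ p') ^ (1/p') :=
    my_lp_cmp hp0 hp'0 hn A hAnn
  have step4 : (∑ i, A i ^ p') ^ (1/p') = eNorm p' α := by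
    unfold eNorm
    congr 1
    refine Finset.sum_congr rfl fun i _ => ?_
    exact my_rpow_rpow_inv
      (Finset.sum_nonneg fun k _ => Real.rpow_nonneg (norm_nonneg _) _) hp'0.ne'
  calc lpNorm p (α.mulVec x) ≤ (∑ i, A i ^ p) ^ (1/p) := step2
    _ ≤ (n:ℝ) ^ |1/p - 1/p'| * (∑ i, A i ^ p') ^ (1/p') := step3
    _ = (n:ℝ) ^ |1/p - 1/p'| * eNorm p' α := by rw [step4]

lemma my_opNorm_le_B {p p' : ℝ} (hp : 1 < p) (hp' : 1 < p') (hconj : 1 / p + 1 / p' = 1)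
    {n r : ℕ} (hn : 1 ≤ n) (β : Matrix (Fin r) (Fin n) ℂ) :
    opNorm p β ≤ (n:ℝ) ^ |1/p - 1/p'| * eNorm p β := by
  have hpc : Real.HolderConjugate p p' := my_conj hp hconj
  have hp0 : 0 < p := lt_trans one_pos hp
  have hp'0 : 0 < p' := lt_trans one_pos hp'
  set t : ℝ := (n:ℝ) ^ |1/p - 1/p'| with hT
  have ht0 : 0 ≤ t := Real.rpow_nonneg (Nat.cast_nonneg n) _
  set B : Fin r → ℝ := fun k => (∑ j, ‖β k j‖ ^ p) ^ (1/p) with hB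
  have hBnn : ∀ k, 0 ≤ B k := fun k =>
    Real.rpow_nonneg (Finset.sum_nonneg fun j _ => Real.rpow_nonneg (norm_nonneg _) _) _
  have hMnn : 0 ≤ t * eNorm p β := mul_nonneg ht0 (my_eNorm_nonneg p β)
  apply Real.sSup_le _ hMnn
  rintro c ⟨x, hx, rfl⟩
  have step0 : (∑ j, ‖x j‖ ^ p') ^ (1/p') ≤ t := by
    have h1 : (∑ j, ‖x j‖ ^ p') ^ (1/p') ≤ (n:ℝ) ^ |1/p' - 1/p| * (∑ j, ‖x j‖ ^ p) ^ (1/p) :=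
      my_lp_cmp hp'0 hp0 hn _ (fun j => norm_nonneg _)
    have h2 : (∑ j, ‖x j‖ ^ p) ^ (1/p) ≤ 1 := hx
    have h3 : |1/p' - 1/p| = |1/p - 1/p'| := abs_sub_comm _ _
    calc (∑ j, ‖x j‖ ^ p') ^ (1/p')
        ≤ (n:ℝ) ^ |1/p' - 1/p| * (∑ j, ‖x j‖ ^ p) ^ (1/p) := h1
      _ ≤ (n:ℝ) ^ |1/p' - 1/p| * 1 :=
          mul_le_mul_of_nonneg_left h2 (Real.rpow_nonneg (Nat.cast_nonneg n) _)
      _ = t := by rw [mul_one, h3]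
  have step1 : ∀ k, ‖β.mulVec x k‖ ≤ B k * t := by
    intro k
    have h1 : ‖β.mulVec x k‖ ≤ ∑ j, ‖β k j‖ * ‖x j‖ := by
      calc ‖β.mulVec x k‖ = ‖∑ j, β k j * x j‖ := rfl
        _ ≤ ∑ j, ‖β k j * x j‖ := norm_sum_le _ _
        _ = ∑ j, ‖β k j‖ * ‖x j‖ := by simp [norm_mul]
    have h2 : ∑ j, ‖β k j‖ * ‖x j‖ ≤ B k * (∑ j, ‖x j‖ ^ p') ^ (1/p') :=
      Real.inner_le_Lp_mul_Lq_of_nonneg Finset.univ hpc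
        (fun j _ => norm_nonneg _) (fun j _ => norm_nonneg _)
    calc ‖β.mulVec x k‖ ≤ B k * (∑ j, ‖x j‖ ^ p') ^ (1/p') := le_trans h1 h2
      _ ≤ B k * t := mul_le_mul_of_nonneg_left step0 (hBnn k)
  have step2 : lpNorm p (β.mulVec x) ≤ (∑ k, (B k * t) ^ p) ^ (1/p) := by
    apply Real.rpow_le_rpow (Finset.sum_nonneg fun k _ => Real.rpow_nonneg (norm_nonneg _) _)
      _ (by positivity)
    exact Finset.sum_le_sum fun k _ =>
      Real.rpow_le_rpow (norm_nonneg _) (step1 k) hp0.le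
  have step3 : (∑ k, (B k * t) ^ p) ^ (1/p) = (∑ k, B k ^ p) ^ (1/p) * t := by
    have h1 : ∀ k : Fin r, (B k * t) ^ p = B k ^ p * t ^ p := fun k =>
      Real.mul_rpow (hBnn k) ht0
    simp_rw [h1, ← Finset.sum_mul]
    rw [Real.mul_rpow (Finset.sum_nonneg fun k _ => Real.rpow_nonneg (hBnn k) _)
      (Real.rpow_nonneg ht0 _), my_rpow_inv_rpow ht0 hp0.ne']
  have step4 : (∑ k, B k ^ p) ^ (1/p) = eNorm p β := by
    unfold eNorm
    congr 1
    refine Finset.sum_congr rfl fun k _ => ?_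
    exact my_rpow_rpow_inv
      (Finset.sum_nonneg fun j _ => Real.rpow_nonneg (norm_nonneg _) _) hp0.ne'
  calc lpNorm p (β.mulVec x) ≤ (∑ k, (B k * t) ^ p) ^ (1/p) := step2
    _ = (∑ k, B k ^ p) ^ (1/p) * t := step3
    _ = t * eNorm p β := by rw [step4, mul_comm]

lemma my_act_one_one {n : ℕ} (v : Matrix (Fin n) (Fin n) V) : act 1 v 1 = v := by
  funext i j
  simp [act, Matrix.one_apply, ite_smul, zero_smul, mul_ite, ite_mul, one_mul, mul_one,
    mul_zero, zero_mul, Finset.sum_ite_eq, Finset.sum_ite_eq']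

end OpBounds

/-- `‖v‖_{M_n(V)} ≤ n^{2|1/p-1/p'|} ‖v‖_{1,n}`; in particular `‖v‖_{1,n} = 0` implies
`v = 0`. -/
theorem norm_le_norm1 (p p' : ℝ) (hp : 1 < p) (hp' : 1 < p')
    (hconj : 1 / p + 1 / p' = 1) (S : POpSpace p V) (n : ℕ)
    (v : Matrix (Fin n) (Fin n) V) :
    S.N n v ≤ (n : ℝ) ^ (2 * |1 / p - 1 / p'|) * norm1 p' S n v ∧
      (norm1 p' S n v = 0 → v = 0) := by
  have hnorm1nn : 0 ≤ norm1 p' S n v := by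
    unfold norm1
    apply Real.sInf_nonneg
    rintro c ⟨r, α, w, β, hv, rfl⟩
    exact mul_nonneg (mul_nonneg (my_eNorm_nonneg p' α) (S.nonneg r w)) (my_eNorm_nonneg p β)
  have h1 : S.N n v ≤ (n : ℝ) ^ (2 * |1 / p - 1 / p'|) * norm1 p' S n v := by
    rcases Nat.eq_zero_or_pos n with hn | hn
    · subst hn
      have hv : v = 0 := by
        funext i j
        exact i.elim0
      rw [(S.eq_zero_iff 0 v).2 hv]
      exact mul_nonneg (Real.rpow_nonneg (Nat.cast_nonneg 0) _) hnorm1nn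
    · have hn0 : (0:ℝ) < (n:ℝ) := by exact_mod_cast hn
      have hK : (0:ℝ) < (n:ℝ) ^ (2 * |1/p - 1/p'|) := Real.rpow_pos_of_pos hn0 _
      rw [mul_comm, ← div_le_iff₀ hK]
      unfold norm1
      have hne : Set.Nonempty {c | ∃ (r : ℕ) (α : Matrix (Fin n) (Fin r) ℂ)
          (w : Matrix (Fin r) (Fin r) V) (β : Matrix (Fin r) (Fin n) ℂ),
          v = act α w β ∧ c = eNorm p' α * S.N r w * eNorm p β} :=
        ⟨eNorm p' (1 : Matrix (Fin n) (Fin n) ℂ) * S.N n v * eNorm p (1 : Matrix (Fin n) (Fin n) ℂ),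
          n, 1, v, 1, (my_act_one_one v).symm, rfl⟩
      apply le_csInf hne
      rintro c ⟨r, α, w, β, hv, rfl⟩
      rw [div_le_iff₀ hK, hv]
      have hA := my_opNorm_le_A hp hp' hconj hn α
      have hB := my_opNorm_le_B hp hp' hconj hn β
      have key : S.N n (act α w β) ≤
          ((n:ℝ) ^ |1/p - 1/p'| * eNorm p' α) * S.N r w *
            ((n:ℝ) ^ |1/p - 1/p'| * eNorm p β) := by
        refine le_trans (S.Mp n r α w β) ?_
        have h2 : opNorm p α * S.N r w ≤ ((n:ℝ) ^ |1/p - 1/p'| * eNorm p' α) * S.N r w :=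
          mul_le_mul_of_nonneg_right hA (S.nonneg r w)
        exact mul_le_mul h2 hB (my_opNorm_nonneg p β)
          (mul_nonneg (mul_nonneg (Real.rpow_nonneg hn0.le _) (my_eNorm_nonneg p' α))
            (S.nonneg r w))
      refine le_trans key (le_of_eq ?_)
      have hpow : (n:ℝ) ^ |1/p - 1/p'| * (n:ℝ) ^ |1/p - 1/p'|
          = (n:ℝ) ^ (2 * |1/p - 1/p'|) := by
        rw [← Real.rpow_add hn0]
        ring_nf
      calc ((n:ℝ) ^ |1/p - 1/p'| * eNorm p' α) * S.N r w *
            ((n:ℝ) ^ |1/p - 1/p'| * eNorm p β)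
          = (eNorm p' α * S.N r w * eNorm p β)
              * ((n:ℝ) ^ |1/p - 1/p'| * (n:ℝ) ^ |1/p - 1/p'|) := by ring
        _ = eNorm p' α * S.N r w * eNorm p β * (n:ℝ) ^ (2 * |1/p - 1/p'|) := by rw [hpow]
  refine ⟨h1, fun h0 => ?_⟩
  have h2 := h1
  rw [h0, mul_zero] at h2
  exact (S.eq_zero_iff n v).1 (le_antisymm h2 (S.nonneg n v))
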